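/- The n-th derivative of the function x ↦ 1/((x-1)^a x^b) is given by ∂_x^n [(x-1)^{-a} x^{-b}] = (b)_n (x-1)^{-a-n} x^{-b-n} · ₂F₁(-n, -n-a-b+1; -n-b+1; x), where (b)_n is the Pochhammer symbol, valid for b not equal to 0, -1, …, -n+1, and x ∉ {0,1}. -/

import Mathlib

open scoped BigOperators

/-- The terminating Gauss hypergeometric series `₂F₁(-n, b; c; x)`
(a polynomial of degree `n` in `x`), written with rising factorials. -/
noncomputable def F21term (n : ℕ) (b c x : ℝ) : ℝ :=
  ∑ k ∈ Finset.range (n + 1),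
    (ascPochhammer ℝ k).eval (-(n : ℝ)) * (ascPochhammer ℝ k).eval b /
      (ascPochhammer ℝ k).eval c * x ^ k / (Nat.factorial k : ℝ)

open Finset

noncomputable def pe (k : ℕ) (y : ℝ) : ℝ := (ascPochhammer ℝ k).eval y
@[simp] lemma pe_zero (y : ℝ) : pe 0 y = 1 := by simp [pe]
lemma pe_succ (k : ℕ) (y : ℝ) : pe (k+1) y = pe k y * (y + k) := by
  simp [pe, ascPochhammer_succ_eval]
lemma pe_succ_left (k : ℕ) (y : ℝ) : pe (k+1) y = y * pe k (y+1) := by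
  simp [pe, ascPochhammer_succ_left, Polynomial.eval_comp]
lemma pe_shift (s t : ℕ) (y : ℝ) : pe (s+t) y = pe s y * pe t (y+s) := by
  induction t with
  | zero => simp
  | succ t ih => rw [← add_assoc, pe_succ, ih, pe_succ]; push_cast; ring
lemma pe_neg (m : ℕ) (y : ℝ) : pe m (1 - y - m) = (-1)^m * pe m y := by
  induction m generalizing y with
  | zero => simp
  | succ m ih =>
      rw [pe_succ_left]
      have h1 : (1 : ℝ) - y - (m+1 : ℕ) + 1 = 1 - y - m := by push_cast; ring
      rw [h1, ih, pe_succ]; push_cast; ring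

lemma pe_nat_cast (k m : ℕ) : pe k (m : ℝ) = (m.ascFactorial k : ℝ) := by
  rw [pe, ← ascPochhammer_nat_eq_ascFactorial]
  exact_mod_cast (ascPochhammer_eval_cast ℝ k m).symm

lemma pe_neg_nat (n m : ℕ) (h : m ≤ n) :
    pe m (-(n:ℝ)) = (-1)^m * (m.factorial : ℝ) * (n.choose m : ℝ) := by
  have h1 : -(n:ℝ) = 1 - (((n-m+1 : ℕ)):ℝ) - m := by
    push_cast [h]; ring
  rw [h1, pe_neg, pe_nat_cast]
  rw [show (n-m+1) = (n-m)+1 from rfl, Nat.ascFactorial_eq_factorial_mul_choose,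
    show n-m+m = n by omega]
  push_cast; ring

lemma pe_reflect (c : ℝ) (n m : ℕ) (h : m ≤ n) :
    pe m (1 - n - c) * pe (n-m) c = (-1)^m * pe n c := by
  have h1 : pe n c = pe (n-m) c * pe m (c + (n-m : ℕ)) := by
    rw [← pe_shift, show (n-m)+m = n by omega]
  have h2 : pe m (1 - n - c) = (-1)^m * pe m (c + (n-m : ℕ)) := by
    have h3 : (1:ℝ) - n - c = 1 - (c + ((n-m:ℕ):ℝ)) - m := by push_cast [h]; ring
    rw [h3, pe_neg]
  rw [h1, h2]; ring

lemma pe_ne_zero (n : ℕ) (b : ℝ) (hb : ∀ k : ℕ, k < n → b ≠ -(k : ℝ)) (m : ℕ) (hm : m ≤ n) :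
    pe m (-(n:ℝ) - b + 1) ≠ 0 := by
  induction m with
  | zero => simp
  | succ m ih =>
      rw [pe_succ]
      refine mul_ne_zero (ih (by omega)) ?_
      intro h0
      have hb' := hb (n - 1 - m) (by omega)
      apply hb'
      have h2 : ((n-1-m : ℕ) : ℝ) = (n:ℝ) - 1 - m := by
        have : n - 1 - m + (1 + m) = n := by omega
        have := congrArg (Nat.cast (R := ℝ)) this
        push_cast at this
        linarith
      rw [h2]; linarith

lemma pe_vandermonde (u v : ℝ) (m : ℕ) :
    pe m (u+v) = ∑ k ∈ range (m+1), (m.choose k : ℝ) * pe k u * pe (m-k) v := by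
  induction m with
  | zero => simp
  | succ m ih =>
      rw [pe_succ, ih, sum_mul]
      have hsplit : ∀ k ∈ range (m+1),
          (m.choose k : ℝ) * pe k u * pe (m-k) v * (u + v + m)
            = (m.choose k : ℝ) * pe (k+1) u * pe (m-k) v
              + (m.choose k : ℝ) * pe k u * pe ((m-k)+1) v := by
        intro k hk
        have hk' : k ≤ m := by simpa [Nat.lt_succ_iff] using hk
        have hc : ((m-k : ℕ) : ℝ) = (m : ℝ) - k := by
          push_cast [hk']; ring
        rw [pe_succ, pe_succ, hc]
        ring
      rw [sum_congr rfl hsplit, sum_add_distrib]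
      -- second sum: reindex (m-k)+1 = (m+1)-k
      have h2 : ∀ k ∈ range (m+1),
          (m.choose k : ℝ) * pe k u * pe ((m-k)+1) v
            = (m.choose k : ℝ) * pe k u * pe ((m+1)-k) v := by
        intro k hk
        have hk' : k ≤ m := by simpa [Nat.lt_succ_iff] using hk
        rw [show (m-k)+1 = (m+1)-k by omega]
      rw [sum_congr rfl h2]
      -- now RHS target: peel k = 0
      rw [Finset.sum_range_succ' (fun k => ((m+1).choose k : ℝ) * pe k u * pe ((m+1)-k) v) (m+1)]
      -- LHS second sum: peel k = 0
      rw [Finset.sum_range_succ' (fun k => (m.choose k : ℝ) * pe k u * pe ((m+1)-k) v) m]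
      -- extend the shifted sum from range m to range (m+1): last term is 0
      have hext : ∑ k ∈ range m, (m.choose (k+1) : ℝ) * pe (k+1) u * pe ((m+1)-(k+1)) v
          = ∑ k ∈ range (m+1), (m.choose (k+1) : ℝ) * pe (k+1) u * pe (m-k) v := by
        rw [Finset.sum_range_succ, Nat.choose_succ_self]
        simp only [Nat.cast_zero, zero_mul, add_zero]
        apply sum_congr rfl
        intro k hk
        rw [show (m+1)-(k+1) = m-k by omega]
      rw [hext]
      rw [← add_assoc, ← sum_add_distrib]
      apply congrArg₂ _ ?_ ?_
      · apply sum_congr rfl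
        intro k hk
        rw [show (m+1)-(k+1) = m-k by omega, Nat.choose_succ_succ]
        push_cast
        ring
      · simp

lemma tri_swap (f : ℕ → ℕ → ℝ) (n : ℕ) :
    ∑ k ∈ range (n+1), ∑ j ∈ range (n+1-k), f k j
      = ∑ m ∈ range (n+1), ∑ k ∈ range (m+1), f k (m-k) := by
  induction n with
  | zero => simp
  | succ n ih =>
      rw [Finset.sum_range_succ (fun m => ∑ k ∈ range (m+1), f k (m-k)) (n+1), ← ih]
      rw [Finset.sum_range_succ (fun k => ∑ j ∈ range (n+2-k), f k j) (n+1)]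
      have h1 : ∀ k ∈ range (n+1),
          ∑ j ∈ range (n+2-k), f k j = (∑ j ∈ range (n+1-k), f k j) + f k (n+1-k) := by
        intro k hk
        have hk' : k ≤ n := by simpa [Nat.lt_succ_iff] using hk
        rw [show n+2-k = (n+1-k)+1 by omega, Finset.sum_range_succ]
      rw [sum_congr rfl h1, sum_add_distrib]
      rw [Finset.sum_range_succ (fun k => f k (n+1-k)) (n+1)]
      simp [add_assoc]

lemma hasDerivAt_term (p q : ℝ) {x : ℝ} (hx : 1 < x) :
    HasDerivAt (fun t : ℝ => (t-1)^p * t^q)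
      (p*(x-1)^(p-1)*x^q + (x-1)^p*(q*x^(q-1))) x := by
  have hx0 : x ≠ 0 := by linarith
  have hx1 : x - 1 ≠ 0 := by intro h; apply (by linarith : x ≠ 1); linarith
  have h1 : HasDerivAt (fun t : ℝ => t - 1) 1 x := (hasDerivAt_id x).sub_const 1
  have h2 : HasDerivAt (fun t : ℝ => (t-1)^p) (p*(x-1)^(p-1)) x := by
    simpa [Function.comp_def] using (Real.hasDerivAt_rpow_const (p := p) (Or.inl hx1)).comp x h1
  have h3 : HasDerivAt (fun t : ℝ => t^q) (q*x^(q-1)) x :=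
    Real.hasDerivAt_rpow_const (Or.inl hx0)
  exact h2.mul h3

noncomputable def Gfun (a b : ℝ) (n : ℕ) (x : ℝ) : ℝ :=
  ∑ k ∈ range (n+1), (n.choose k : ℝ) * (-1)^n * pe k a * pe (n-k) b
    * ((x-1)^(-a-(k:ℝ)) * x^(-b-(n:ℝ)+(k:ℝ)))

lemma claimA (a b : ℝ) (n : ℕ) (x : ℝ) (hx : 1 < x) :
    iteratedDeriv n (fun t : ℝ => (t - 1) ^ (-a) * t ^ (-b)) x = Gfun a b n x := by
  induction n generalizing x with
  | zero =>
      rw [iteratedDeriv_zero, Gfun]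
      norm_num
  | succ n ih =>
      rw [iteratedDeriv_succ]
      have hev : iteratedDeriv n (fun t : ℝ => (t - 1) ^ (-a) * t ^ (-b))
          =ᶠ[nhds x] Gfun a b n := by
        have hopen : IsOpen {y : ℝ | 1 < y} := isOpen_lt continuous_const continuous_id
        filter_upwards [hopen.mem_nhds hx] with y hy using ih y hy
      rw [hev.deriv_eq]
      have hD : HasDerivAt (Gfun a b n)
          (∑ k ∈ range (n+1), (n.choose k : ℝ) * (-1)^n * pe k a * pe (n-k) b *
            ((-a-(k:ℝ))*(x-1)^(-a-(k:ℝ)-1)*x^(-b-(n:ℝ)+(k:ℝ))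
              + (x-1)^(-a-(k:ℝ))*((-b-(n:ℝ)+(k:ℝ))*x^(-b-(n:ℝ)+(k:ℝ)-1)))) x := by
        apply HasDerivAt.fun_sum
        intro k hk
        exact (hasDerivAt_term (-a-(k:ℝ)) (-b-(n:ℝ)+(k:ℝ)) hx).const_mul _
      rw [hD.deriv, Gfun]
      have cB : ℕ → ℝ := fun k => 0
      -- names for the two derivative pieces (with coefficient)
      simp only [mul_add]
      rw [sum_add_distrib]
      -- RHS: peel k = 0
      rw [Finset.sum_range_succ' (fun k => ((n+1).choose k : ℝ) * (-1)^(n+1) * pe k a * pe (n+1-k) b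
        * ((x-1)^(-a-(k:ℝ)) * x^(-b-((n+1 : ℕ):ℝ)+(k:ℝ)))) (n+1)]
      -- LHS B-sum: peel k = 0
      rw [Finset.sum_range_succ' (fun k => (n.choose k : ℝ) * (-1)^n * pe k a * pe (n-k) b
        * ((x-1)^(-a-(k:ℝ))*((-b-(n:ℝ)+(k:ℝ))*x^(-b-(n:ℝ)+(k:ℝ)-1)))) n]
      -- extend shifted B-sum from range n to range (n+1)
      have hext : ∑ k ∈ range n, ((n.choose (k+1) : ℝ) * (-1)^n * pe (k+1) a * pe (n-(k+1)) b
            * ((x-1)^(-a-((k+1 : ℕ):ℝ))*((-b-(n:ℝ)+((k+1 : ℕ):ℝ))*x^(-b-(n:ℝ)+((k+1 : ℕ):ℝ)-1))))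
          = ∑ k ∈ range (n+1), ((n.choose (k+1) : ℝ) * (-1)^n * pe (k+1) a * pe (n-(k+1)) b
            * ((x-1)^(-a-((k+1 : ℕ):ℝ))*((-b-(n:ℝ)+((k+1 : ℕ):ℝ))*x^(-b-(n:ℝ)+((k+1 : ℕ):ℝ)-1)))) := by
        rw [Finset.sum_range_succ, Nat.choose_succ_self]
        norm_num
      rw [hext, ← add_assoc, ← sum_add_distrib]
      congr 1
      · apply sum_congr rfl
        intro k hk
        have hk' : k ≤ n := by simpa [Nat.lt_succ_iff] using hk
        rcases Nat.lt_or_ge k n with hkn | hkn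
        · obtain ⟨d, hd⟩ : ∃ d, n = k+1+d := ⟨n-(k+1), by omega⟩
          subst hd
          rw [show k+1+d-k = d+1 by omega, show k+1+d-(k+1) = d by omega,
            show k+1+d+1-(k+1) = d+1 by omega,
            pe_succ d b, pe_succ k a, Nat.choose_succ_succ (k+1+d) k]
          push_cast
          ring_nf
          simp only [Nat.succ_eq_add_one]
          ring_nf
        · rw [show n+1-(k+1) = 0 by omega, show n-k = 0 by omega, show n-(k+1) = 0 by omega,
            Nat.choose_succ_succ n k, Nat.choose_eq_zero_of_lt (by omega : n < k+1),
            pe_succ k a, show n = k by omega]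
          simp only [pe_zero, Nat.choose_self, Nat.cast_zero, Nat.cast_one, Nat.cast_add, add_zero]
          push_cast
          ring_nf
      · rw [show n+1-0 = n+1 by omega, show n-0 = n by omega, pe_succ n b]
        simp only [pe_zero, Nat.choose_zero_right, Nat.cast_one]
        push_cast
        ring_nf

lemma F21term_eq (n : ℕ) (b c x : ℝ) : F21term n b c x
    = ∑ k ∈ range (n+1), pe k (-(n:ℝ)) * pe k b / pe k c * x^k / (k.factorial : ℝ) := rfl

lemma claimB (a b : ℝ) (n : ℕ) (hb : ∀ k : ℕ, k < n → b ≠ -(k : ℝ)) (x : ℝ) (hx : 1 < x) :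
    Gfun a b n x = pe n b * (x - 1) ^ (-a - (n : ℝ)) * x ^ (-b - (n : ℝ)) *
      F21term n (-(n : ℝ) - a - b + 1) (-(n : ℝ) - b + 1) x := by
  have hx0 : (0:ℝ) < x := by linarith
  have hx1' : (0:ℝ) < x - 1 := by linarith
  -- Step 1: pull out the rpow factors
  have step1 : Gfun a b n x = ((x-1)^(-a-(n:ℝ)) * x^(-b-(n:ℝ))) *
      ∑ k ∈ range (n+1), (n.choose k : ℝ) * (-1)^n * pe k a * pe (n-k) b
        * ((x-1)^((n-k : ℕ)) * x^k) := by
    rw [Gfun, mul_sum]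
    apply sum_congr rfl
    intro k hk
    have hk' : k ≤ n := by simpa [Nat.lt_succ_iff] using hk
    have e1 : (x-1)^(-a-(k:ℝ)) = (x-1)^(-a-(n:ℝ)) * (x-1)^((n-k : ℕ)) := by
      rw [← Real.rpow_natCast (x-1) (n-k), ← Real.rpow_add hx1']
      congr 1
      push_cast [hk']
      ring
    have e2 : x^(-b-(n:ℝ)+(k:ℝ)) = x^(-b-(n:ℝ)) * x^k := by
      rw [← Real.rpow_natCast x k, ← Real.rpow_add hx0]
    rw [e1, e2]
    ring
  -- Step 2: binomial expansion and triangle swap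
  have step2 : ∑ k ∈ range (n+1), (n.choose k : ℝ) * (-1)^n * pe k a * pe (n-k) b
        * ((x-1)^((n-k : ℕ)) * x^k)
      = ∑ m ∈ range (n+1), ∑ k ∈ range (m+1),
          (n.choose k : ℝ) * (-1)^n * pe k a * pe (n-k) b
            * (((n-k).choose (m-k) : ℝ) * (-1)^((n-k)-(m-k)) * x^(k+(m-k))) := by
    calc ∑ k ∈ range (n+1), (n.choose k : ℝ) * (-1)^n * pe k a * pe (n-k) b
          * ((x-1)^((n-k : ℕ)) * x^k)
        = ∑ k ∈ range (n+1), ∑ j ∈ range (n+1-k),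
            (n.choose k : ℝ) * (-1)^n * pe k a * pe (n-k) b
              * (((n-k).choose j : ℝ) * (-1)^((n-k)-j) * x^(k+j)) := by
          apply sum_congr rfl
          intro k hk
          have hk' : k ≤ n := by simpa [Nat.lt_succ_iff] using hk
          have hbin : (x-1)^((n-k : ℕ))
              = ∑ j ∈ range (n+1-k), x^j * (-1 : ℝ)^((n-k)-j) * ((n-k).choose j) := by
            rw [show x - 1 = x + (-1) by ring, add_pow, show n+1-k = (n-k)+1 by omega]
          rw [hbin, Finset.sum_mul, Finset.mul_sum]
          apply sum_congr rfl
          intro j hj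
          rw [pow_add]
          ring
      _ = _ := tri_swap (fun k j => (n.choose k : ℝ) * (-1)^n * pe k a * pe (n-k) b
            * (((n-k).choose j : ℝ) * (-1)^((n-k)-j) * x^(k+j))) n
  rw [step1, step2]
  rw [F21term_eq]
  have main : ∀ m ∈ range (n+1),
      (∑ k ∈ range (m+1),
          (n.choose k : ℝ) * (-1)^n * pe k a * pe (n-k) b
            * (((n-k).choose (m-k) : ℝ) * (-1)^((n-k)-(m-k)) * x^(k+(m-k))))
        = pe n b * (pe m (-(n:ℝ)) * pe m (-(n:ℝ)-a-b+1) / pe m (-(n:ℝ)-b+1)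
            * x^m / (m.factorial : ℝ)) := by
    intro m hm
    have hm' : m ≤ n := by simpa [Nat.lt_succ_iff] using hm
    have hcast : ((n-m : ℕ) : ℝ) = (n:ℝ) - m := by push_cast [hm']; ring
    -- LHS → factored form
    have hL : (∑ k ∈ range (m+1),
          (n.choose k : ℝ) * (-1)^n * pe k a * pe (n-k) b
            * (((n-k).choose (m-k) : ℝ) * (-1)^((n-k)-(m-k)) * x^(k+(m-k))))
        = ((-1)^m * x^m * (n.choose m : ℝ) * pe (n-m) b)
          * pe m (a + (b + ((n-m : ℕ) : ℝ))) := by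
      rw [pe_vandermonde, mul_sum]
      apply sum_congr rfl
      intro k hk
      have hk' : k ≤ m := by simpa [Nat.lt_succ_iff] using hk
      have h1 : (n-k)-(m-k) = n-m := by omega
      have h2 : k+(m-k) = m := by omega
      have h3 : pe (n-k) b = pe (n-m) b * pe (m-k) (b + ((n-m : ℕ) : ℝ)) := by
        rw [← pe_shift, show (n-m)+(m-k) = n-k by omega]
      have h4 : ((n:ℝ) ⁻¹) = (n:ℝ)⁻¹ := rfl
      have h5 : (n.choose k : ℝ) * ((n-k).choose (m-k) : ℝ)
          = (n.choose m : ℝ) * (m.choose k : ℝ) := by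
        rw [← Nat.cast_mul, ← Nat.cast_mul, ← Nat.choose_mul (n := n) hk']
      have h6 : ((-1 : ℝ))^n * (-1)^(n-m) = (-1)^m := by
        rw [← pow_add, show n + (n-m) = 2*(n-m) + m by omega, pow_add, pow_mul]
        norm_num
      rw [h1, h2, h3]
      calc (n.choose k : ℝ) * (-1)^n * pe k a * (pe (n-m) b * pe (m-k) (b + ((n-m : ℕ) : ℝ)))
            * (((n-k).choose (m-k) : ℝ) * (-1)^(n-m) * x^m)
          = ((n.choose k : ℝ) * ((n-k).choose (m-k) : ℝ)) * ((-1)^n * (-1)^(n-m))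
            * pe k a * pe (n-m) b * pe (m-k) (b + ((n-m : ℕ) : ℝ)) * x^m := by ring
        _ = ((n.choose m : ℝ) * (m.choose k : ℝ)) * (-1)^m
            * pe k a * pe (n-m) b * pe (m-k) (b + ((n-m : ℕ) : ℝ)) * x^m := by rw [h5, h6]
        _ = (-1)^m * x^m * (n.choose m : ℝ) * pe (n-m) b
            * ((m.choose k : ℝ) * pe k a * pe (m-k) (b + ((n-m : ℕ) : ℝ))) := by ring
    -- RHS simplification
    have hPd : pe m (-(n:ℝ)-b+1) ≠ 0 := pe_ne_zero n b hb m hm'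
    have hPdb : pe m (-(n:ℝ)-b+1) * pe (n-m) b = (-1)^m * pe n b := by
      have := pe_reflect b n m hm'
      rw [show (1:ℝ) - n - b = -(n:ℝ)-b+1 by ring] at this
      exact this
    have hPm : pe m (-(n:ℝ)) = (-1)^m * (m.factorial : ℝ) * (n.choose m : ℝ) :=
      pe_neg_nat n m hm'
    have hmm1 : ((-1:ℝ))^m * (-1)^m = 1 := by rw [← mul_pow]; norm_num
    have hPc : pe m (-(n:ℝ)-a-b+1) = (-1)^m * pe m (a + (b + ((n-m : ℕ) : ℝ))) := by
      have h := pe_neg m (a + (b + ((n:ℝ) - m)))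
      rw [show (1:ℝ) - (a + (b + ((n:ℝ) - m))) - m = -(n:ℝ)-a-b+1 by ring] at h
      rw [hcast, h]
    rw [hL, hPm, hPc]
    have hfac : (m.factorial : ℝ) ≠ 0 := by exact_mod_cast m.factorial_ne_zero
    have hpen : pe n b = (-1)^m * (pe m (-(n:ℝ)-b+1) * pe (n-m) b) := by
      rw [hPdb, ← mul_assoc, hmm1, one_mul]
    rw [hpen]
    field_simp
    ring_nf
    rw [show ((-1:ℝ))^(m*2) = 1 by
      rw [pow_mul, pow_two, hmm1], mul_one]
  rw [sum_congr rfl main, ← mul_sum]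
  ring

/-- The `n`-th derivative of `x ↦ (x-1)^{-a} x^{-b}` equals
`(b)_n (x-1)^{-a-n} x^{-b-n} ₂F₁(-n, -n-a-b+1; -n-b+1; x)`, valid for
`b ∉ {0, -1, …, -(n-1)}` and `x ∉ {0,1}` (stated here for `x > 1` where the real
powers are unambiguous). -/
theorem iteratedDeriv_rpow_prod (n : ℕ) (a b : ℝ)
    (hb : ∀ k : ℕ, k < n → b ≠ -(k : ℝ)) (x : ℝ) (hx1 : 1 < x) :
    iteratedDeriv n (fun t : ℝ => (t - 1) ^ (-a) * t ^ (-b)) x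
      = (ascPochhammer ℝ n).eval b * (x - 1) ^ (-a - (n : ℝ)) * x ^ (-b - (n : ℝ)) *
        F21term n (-(n : ℝ) - a - b + 1) (-(n : ℝ) - b + 1) x := by
  exact (claimA a b n x hx1).trans (claimB a b n hb x hx1)
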